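/- Let E be a real normed vector space and N a smooth (1,1) tensor field on E with vanishing Nijenhuis torsion, T(N) = 0. Let a₀, a₁ : E → ℝ be smooth functions satisfying Da₁(x) = Da₀(x) ∘ N(x) for all x ∈ E. Then the 1-form x ↦ Da₁(x) ∘ N(x) is closed. (This is the key step producing the Lenard chain of bi-closed 1-forms ρ_{k+1} = d a_{k+1} = d_N a_k.) -/

import Mathlib

variable {E : Type*} [NormedAddCommGroup E] [NormedSpace ℝ E]

/-- Lie bracket of vector fields on `E`: `[X,Y](x) = DY(x)(X(x)) − DX(x)(Y(x))`. -/
noncomputable def lie (X Y : E → E) : E → E :=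
  fun x => fderiv ℝ Y x (X x) - fderiv ℝ X x (Y x)

/-- Pointwise action of a (1,1) tensor field on a vector field. -/
def app (N : E → E →L[ℝ] E) (X : E → E) : E → E := fun x => N x (X x)

/-- Pointwise `k`-th power of a (1,1) tensor field. -/
def pw (N : E → E →L[ℝ] E) (k : ℕ) : E → E →L[ℝ] E := fun x => (N x) ^ k

/-- Frölicher–Nijenhuis bracket of two (1,1) tensor fields, evaluated on vector fields. -/
noncomputable def fnBracket (N₁ N₂ : E → E →L[ℝ] E) (X Y : E → E) : E → E :=
  fun x =>
    N₁ x (N₂ x (lie X Y x)) + N₂ x (N₁ x (lie X Y x))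
      + lie (app N₁ X) (app N₂ Y) x + lie (app N₂ X) (app N₁ Y) x
      - N₁ x (lie (app N₂ X) Y x + lie X (app N₂ Y) x)
      - N₂ x (lie (app N₁ X) Y x + lie X (app N₁ Y) x)

/-- Nijenhuis torsion of a (1,1) tensor field, evaluated on vector fields. -/
noncomputable def tor (N : E → E →L[ℝ] E) (X Y : E → E) : E → E :=
  fun x =>
    lie (app N X) (app N Y) x
      + N x (N x (lie X Y x) - lie (app N X) Y x - lie X (app N Y) x)

/-- Haantjes tensor of a (1,1) tensor field, evaluated on vector fields. -/
noncomputable def haan (M : E → E →L[ℝ] E) (X Y : E → E) : E → E :=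
  fun x =>
    M x (M x (tor M X Y x)) + tor M (app M X) (app M Y) x
      - M x (tor M (app M X) Y x + tor M X (app M Y) x)

/-- The bracket `[A,B]_X = [AX,BX] − A[X,BX] + B[X,AX]` of two (1,1) tensor fields
with respect to a vector field `X`. -/
noncomputable def brX (A B : E → E →L[ℝ] E) (X : E → E) : E → E :=
  fun x =>
    lie (app A X) (app B X) x - A x (lie X (app B X) x) + B x (lie X (app A X) x)

-- fderiv of x ↦ N x u
lemma fderiv_app_const (N : E → E →L[ℝ] E) (hN : ContDiff ℝ (⊤ : ℕ∞) N) (u x w : E) :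
    fderiv ℝ (fun y => N y u) x w = fderiv ℝ N x w u := by
  have hNx : HasFDerivAt N (fderiv ℝ N x) x :=
    ((hN.differentiable (by simp)) x).hasFDerivAt
  have h := hNx.clm_apply (hasFDerivAt_const u x)
  rw [h.fderiv]
  simp

-- torsion on constant vector fields
lemma tor_const (N : E → E →L[ℝ] E) (hN : ContDiff ℝ (⊤ : ℕ∞) N) (u v x : E) :
    tor N (fun _ => u) (fun _ => v) x
      = fderiv ℝ N x (N x u) v - fderiv ℝ N x (N x v) u
        + N x (fderiv ℝ N x v u) - N x (fderiv ℝ N x u v) := by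
  have hdiff : ∀ w : E, DifferentiableAt ℝ (fun y => N y w) x :=
    fun w => (((hN.differentiable (by simp)) x).clm_apply (differentiableAt_const w))
  have e1 : app N (fun _ => u) = fun y => N y u := rfl
  have e2 : app N (fun _ => v) = fun y => N y v := rfl
  simp only [tor, lie, app, e1, e2]
  rw [fderiv_fun_const]
  simp only [Pi.zero_apply, ContinuousLinearMap.zero_apply]
  simp only [fderiv_app_const N hN u, fderiv_app_const N hN v]
  simp [map_sub]
  abel

-- derivative of x ↦ (fderiv a x).comp (N x)
lemma fderiv_dN (a : E → ℝ) (N : E → E →L[ℝ] E) (ha : ContDiff ℝ (⊤ : ℕ∞) a)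
    (hN : ContDiff ℝ (⊤ : ℕ∞) N) (x u v : E) :
    fderiv ℝ (fun y => (fderiv ℝ a y).comp (N y)) x u v
      = fderiv ℝ a x (fderiv ℝ N x u v) + fderiv ℝ (fderiv ℝ a) x u (N x v) := by
  have hda : ContDiff ℝ (⊤ : ℕ∞) (fderiv ℝ a) := ha.fderiv_right (mod_cast le_top)
  have hc : HasFDerivAt (fderiv ℝ a) (fderiv ℝ (fderiv ℝ a) x) x :=
    ((hda.differentiable (by simp)) x).hasFDerivAt
  have hd : HasFDerivAt N (fderiv ℝ N x) x :=
    ((hN.differentiable (by simp)) x).hasFDerivAt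
  rw [(hc.clm_comp hd).fderiv]
  simp

lemma snd_symm (a : E → ℝ) (ha : ContDiff ℝ (⊤ : ℕ∞) a) (x u v : E) :
    fderiv ℝ (fderiv ℝ a) x u v = fderiv ℝ (fderiv ℝ a) x v u := by
  have hd : ∀ y, HasFDerivAt a (fderiv ℝ a y) y :=
    fun y => ((ha.differentiable (by simp)) y).hasFDerivAt
  have hda : ContDiff ℝ (⊤ : ℕ∞) (fderiv ℝ a) := ha.fderiv_right (mod_cast le_top)
  have hdd : HasFDerivAt (fderiv ℝ a) (fderiv ℝ (fderiv ℝ a) x) x :=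
    ((hda.differentiable (by simp)) x).hasFDerivAt
  exact second_derivative_symmetric hd hdd u v

/-- A 1-form is closed iff its Fréchet derivative is symmetric. -/
def IsClosedOneForm (ρ : E → E →L[ℝ] ℝ) : Prop :=
  ∀ x u v, fderiv ℝ ρ x u v = fderiv ℝ ρ x v u

theorem stmt4 (N : E → E →L[ℝ] E) (hN : ContDiff ℝ (⊤ : ℕ∞) N)
    (hT : ∀ X Y : E → E, ContDiff ℝ (⊤ : ℕ∞) X → ContDiff ℝ (⊤ : ℕ∞) Y →
      ∀ x, tor N X Y x = 0)
    (a₀ a₁ : E → ℝ) (ha₀ : ContDiff ℝ (⊤ : ℕ∞) a₀) (ha₁ : ContDiff ℝ (⊤ : ℕ∞) a₁)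
    (hchain : ∀ x, fderiv ℝ a₁ x = (fderiv ℝ a₀ x).comp (N x)) :
    IsClosedOneForm (fun x => (fderiv ℝ a₁ x).comp (N x)) := by
  intro x u v
  have htor := hT (fun _ => u) (fun _ => v) contDiff_const contDiff_const x
  rw [tor_const N hN u v x] at htor
  rw [fderiv_dN a₁ N ha₁ hN x u v, fderiv_dN a₁ N ha₁ hN x v u]
  have hfd : fderiv ℝ a₁ = fun y => (fderiv ℝ a₀ y).comp (N y) := funext hchain
  have h3 : ∀ w z, fderiv ℝ (fderiv ℝ a₁) x w z
      = fderiv ℝ a₀ x (fderiv ℝ N x w z) + fderiv ℝ (fderiv ℝ a₀) x w (N x z) := by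
    intro w z; rw [hfd]; exact fderiv_dN a₀ N ha₀ hN x w z
  rw [snd_symm a₁ ha₁ x u (N x v), snd_symm a₁ ha₁ x v (N x u), h3, h3,
    snd_symm a₀ ha₀ x (N x v) (N x u), hchain x]
  have h0 := congrArg (fderiv ℝ a₀ x) htor
  simp only [map_sub, map_add, map_zero] at h0
  simp only [ContinuousLinearMap.comp_apply]
  linarith
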